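/- Let 𝒟⁰ be a collection of subsets of a set S with the property that the intersection of any two members of 𝒟⁰ is a finite union of members of 𝒟⁰. Let 𝒟 be the collection of all nonempty sets of the form A ∖ (B₁ ∪ ⋯ ∪ Bₙ) with A, B₁, …, Bₙ ∈ 𝒟⁰, n ≥ 0, and Bᵢ ⊆ A for all i, and let 𝒜 be the collection of all finite disjoint unions of members of 𝒟 (including the empty union). Then 𝒜 is the ring of sets generated by 𝒟⁰. -/

import Mathlib

universe u v

/-- A category of paths: a small category (objects identified with identity
morphisms) with left and right cancellation and no inverses. -/
structure CategoryOfPaths (Λ : Type u) where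
  s : Λ → Λ
  r : Λ → Λ
  comp : Λ → Λ → Λ
  s_comp : ∀ {α β : Λ}, s α = r β → s (comp α β) = s β
  r_comp : ∀ {α β : Λ}, s α = r β → r (comp α β) = r α
  comp_assoc : ∀ {α β γ : Λ}, s α = r β → s β = r γ →
    comp (comp α β) γ = comp α (comp β γ)
  id_comp : ∀ α : Λ, comp (r α) α = α
  comp_id : ∀ α : Λ, comp α (s α) = α
  s_r : ∀ α : Λ, s (r α) = r α
  r_r : ∀ α : Λ, r (r α) = r α
  r_s : ∀ α : Λ, r (s α) = s α
  s_s : ∀ α : Λ, s (s α) = s α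
  left_cancel : ∀ {α β γ : Λ}, s α = r β → s α = r γ → comp α β = comp α γ → β = γ
  right_cancel : ∀ {β γ α : Λ}, s β = r α → s γ = r α → comp β α = comp γ α → β = γ
  no_inverses : ∀ {α β : Λ}, s α = r β → comp α β = s β → α = s β ∧ β = s β

variable {Λ : Type u}

/-- The tail set `αΛ`. -/
def pTail (C : CategoryOfPaths Λ) (α : Λ) : Set Λ :=
  {x | ∃ β, C.s α = C.r β ∧ x = C.comp α β}

/-- `vΛ`, the paths with range `v`. -/
def pRng (C : CategoryOfPaths Λ) (w : Λ) : Set Λ := {α | C.r α = w}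

/-- `Λv`, the paths with source `v`. -/
def pSrc (C : CategoryOfPaths Λ) (w : Λ) : Set Λ := {α | C.s α = w}

/-- `[β]`, the initial segments of `β`. -/
def pSeg (C : CategoryOfPaths Λ) (β : Λ) : Set Λ := {α | β ∈ pTail C α}

/-- `α ⋔ β`. -/
def pMeets (C : CategoryOfPaths Λ) (α β : Λ) : Prop :=
  (pTail C α ∩ pTail C β).Nonempty

/-- `αE`. -/
def pMulSet (C : CategoryOfPaths Λ) (α : Λ) (E : Set Λ) : Set Λ :=
  {x | ∃ β ∈ E, C.s α = C.r β ∧ x = C.comp α β}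

/-- `σ^α(E ∩ αΛ)`, computed inside an ambient subcategory `S`. -/
def pShiftIn (C : CategoryOfPaths Λ) (S : Set Λ) (α : Λ) (E : Set Λ) : Set Λ :=
  {β | β ∈ S ∧ C.s α = C.r β ∧ C.comp α β ∈ E}

/-- `σ^α(E ∩ αΛ)`. -/
def pShift (C : CategoryOfPaths Λ) (α : Λ) (E : Set Λ) : Set Λ :=
  {β | C.s α = C.r β ∧ C.comp α β ∈ E}

/-- `⋁F`: the minimal common extensions of `F`. -/
def pMinExt (C : CategoryOfPaths Λ) (F : Set Λ) : Set Λ :=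
  {ε | (∀ α ∈ F, ε ∈ pTail C α) ∧
    ∀ γ, (∀ α ∈ F, γ ∈ pTail C α) → ε ∈ pTail C γ → γ = ε}

/-- `α ∨ β`: the minimal common extensions of `α` and `β`. -/
def pMinCE (C : CategoryOfPaths Λ) (α β : Λ) : Set Λ := pMinExt C {α, β}

/-- A subcategory of a category of paths, as a set of morphisms. -/
structure IsSubcategory (C : CategoryOfPaths Λ) (Λ₀ : Set Λ) : Prop where
  comp_mem : ∀ {α β : Λ}, α ∈ Λ₀ → β ∈ Λ₀ → C.s α = C.r β → C.comp α β ∈ Λ₀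
  s_mem : ∀ {α : Λ}, α ∈ Λ₀ → C.s α ∈ Λ₀
  r_mem : ∀ {α : Λ}, α ∈ Λ₀ → C.r α ∈ Λ₀

/-- A finitely aligned category of paths. -/
def FinitelyAligned (C : CategoryOfPaths Λ) : Prop :=
  ∀ α β : Λ, ∃ G : Set Λ, G.Finite ∧
    pTail C α ∩ pTail C β = ⋃ ε ∈ G, pTail C ε

/-- A finitely aligned relative category of paths `(Λ₀, Λ)`. -/
def RelFinitelyAligned (C : CategoryOfPaths Λ) (Λ₀ : Set Λ) : Prop :=
  (∀ α ∈ Λ₀, ∀ β ∈ Λ₀, ∃ G : Set Λ, G.Finite ∧ G ⊆ Λ₀ ∧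
      pTail C α ∩ pTail C β = ⋃ ε ∈ G, pTail C ε) ∧
  (∀ α ∈ Λ₀, pTail C α ∩ Λ₀ = pMulSet C α Λ₀)

/-- A ring of sets: contains `∅` and is closed under `∪`, `∩`, and `\`. -/
def IsSetRing {γ : Type v} (R : Set (Set γ)) : Prop :=
  ∅ ∈ R ∧ (∀ E ∈ R, ∀ F ∈ R, E ∪ F ∈ R) ∧ (∀ E ∈ R, ∀ F ∈ R, E ∩ F ∈ R) ∧
    (∀ E ∈ R, ∀ F ∈ R, E \ F ∈ R)

/-- A ring of sets on `S`: a ring of sets all of whose members are subsets of `S`. -/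
def IsSetRingOn {γ : Type v} (S : Set γ) (R : Set (Set γ)) : Prop :=
  IsSetRing R ∧ ∀ E ∈ R, E ⊆ S

/-- The ring of sets generated by a collection. -/
def setRingGen {γ : Type v} (G : Set (Set γ)) : Set (Set γ) :=
  ⋂₀ {R | IsSetRing R ∧ G ⊆ R}

/-- The ring of sets on `S` generated by a collection. -/
def setRingGenOn {γ : Type v} (S : Set γ) (G : Set (Set γ)) : Set (Set γ) :=
  ⋂₀ {R | IsSetRingOn S R ∧ G ⊆ R}

/-- A zigzag: a list of pairs `(αᵢ, βᵢ)` with `r αᵢ = r βᵢ` and `s αᵢ₊₁ = s βᵢ`. -/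
def IsZigzag (C : CategoryOfPaths Λ) (l : List (Λ × Λ)) : Prop :=
  (∀ p ∈ l, C.r p.1 = C.r p.2) ∧ l.Chain' (fun p q => C.s q.1 = C.s p.2)

/-- The (graph of the) zigzag map `φ_ζ = σ^{α₁} β₁ ⋯ σ^{αₙ} βₙ`, computed
inside an ambient subcategory `S`. -/
def zigzagRelIn (C : CategoryOfPaths Λ) (S : Set Λ) : List (Λ × Λ) → Λ → Λ → Prop
  | [], x, y => x = y ∧ x ∈ S
  | p :: rest, x, y => ∃ z, zigzagRelIn C S rest x z ∧ C.s p.2 = C.r z ∧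
      C.s p.1 = C.r y ∧ y ∈ S ∧ C.comp p.2 z = C.comp p.1 y

/-- `A(ζ)`: the domain of the zigzag map. -/
def zigzagDomIn (C : CategoryOfPaths Λ) (S : Set Λ) (l : List (Λ × Λ)) : Set Λ :=
  {x | ∃ y, zigzagRelIn C S l x y}

/-- `𝒟(Λ₀,Λ)⁰_v`: nonempty zigzag sets with entries in `Λ₀` and source `v`,
computed inside the ambient subcategory `S`. -/
def relD0 (C : CategoryOfPaths Λ) (Λ₀ S : Set Λ) (w : Λ) : Set (Set Λ) :=
  {E | E.Nonempty ∧ ∃ (l : List (Λ × Λ)) (h : l ≠ []),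
    IsZigzag C l ∧ (∀ p ∈ l, p.1 ∈ Λ₀ ∧ p.2 ∈ Λ₀) ∧
    C.s (l.getLast h).2 = w ∧ E = zigzagDomIn C S l}

/-- `𝒜(Λ₀,Λ)_v`: the ring of sets generated by the zigzag sets. -/
def relAring (C : CategoryOfPaths Λ) (Λ₀ S : Set Λ) (w : Λ) : Set (Set Λ) :=
  setRingGenOn {α | α ∈ S ∧ C.r α = w} (relD0 C Λ₀ S w)

/-- A filter in a ring of sets. -/
def IsFilterIn {γ : Type v} (R U : Set (Set γ)) : Prop :=
  U.Nonempty ∧ U ⊆ R ∧ (∀ E ∈ U, E.Nonempty) ∧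
    (∀ E ∈ U, ∀ F ∈ U, E ∩ F ∈ U) ∧ (∀ E ∈ U, ∀ F ∈ R, E ⊆ F → F ∈ U)

/-- An ultrafilter in a ring of sets: a maximal filter. -/
def IsUltrafilterIn {γ : Type v} (R U : Set (Set γ)) : Prop :=
  IsFilterIn R U ∧ ∀ V, IsFilterIn R V → U ⊆ V → V = U

/-- A filter base in a ring of sets. -/
def IsFilterBaseIn {γ : Type v} (R B : Set (Set γ)) : Prop :=
  B.Nonempty ∧ B ⊆ R ∧ (∀ E ∈ B, E.Nonempty) ∧
    ∀ E ∈ B, ∀ F ∈ B, ∃ G ∈ B, G ⊆ E ∩ F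

/-- The filter generated by a filter base. -/
def filterGenBy {γ : Type v} (R B : Set (Set γ)) : Set (Set γ) :=
  {E | E ∈ R ∧ ∃ F ∈ B, F ⊆ E}

/-- An ultrafilter base in a ring of sets. -/
def IsUltrafilterBaseIn {γ : Type v} (R B : Set (Set γ)) : Prop :=
  IsFilterBaseIn R B ∧ IsUltrafilterIn R (filterGenBy R B)

/-- A Boolean ring homomorphism defined on a ring of sets `A` with values in a
generalized Boolean algebra. -/
def IsBRHomOn {γ : Type v} {R : Type*} [GeneralizedBooleanAlgebra R]
    (A : Set (Set γ)) (ν : Set γ → R) : Prop :=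
  ν ∅ = ⊥ ∧ (∀ E ∈ A, ∀ F ∈ A, ν (E ∪ F) = ν E ⊔ ν F) ∧
    (∀ E ∈ A, ∀ F ∈ A, ν (E ∩ F) = ν E ⊓ ν F) ∧
    (∀ E ∈ A, ∀ F ∈ A, ν (E \ F) = ν E \ ν F)

/-- `𝒜_v`: the ring of sets on `vΛ` generated by the tail sets. -/
def tailRing (C : CategoryOfPaths Λ) (w : Λ) : Set (Set Λ) :=
  setRingGenOn (pRng C w) {E | ∃ α, C.r α = w ∧ E = pTail C α}

/-- A directed subset. -/
def pDirected (C : CategoryOfPaths Λ) (x : Set Λ) : Prop :=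
  ∀ α ∈ x, ∀ β ∈ x, (pTail C α ∩ pTail C β ∩ x).Nonempty

/-- A hereditary subset. -/
def pHereditary (C : CategoryOfPaths Λ) (x : Set Λ) : Prop :=
  ∀ γ ∈ x, ∀ α : Λ, γ ∈ pTail C α → α ∈ x

/-- `vΛ*`: the nonempty directed hereditary subsets of `vΛ`. -/
def lamStar (C : CategoryOfPaths Λ) (w : Λ) : Set (Set Λ) :=
  {x | x.Nonempty ∧ x ⊆ pRng C w ∧ pDirected C x ∧ pHereditary C x}

/-- `vΛ**`: the maximal directed subsets of `vΛ`. -/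
def lamStarStar (C : CategoryOfPaths Λ) (w : Λ) : Set (Set Λ) :=
  {x | x ⊆ pRng C w ∧ pDirected C x ∧
    ∀ y, y ⊆ pRng C w → pDirected C y → x ⊆ y → y = x}

/-- `αx = ⋃_{γ ∈ x} [αγ]` for `x ∈ s(α)Λ*`. -/
def pMulStar (C : CategoryOfPaths Λ) (α : Λ) (x : Set Λ) : Set Λ :=
  {δ | ∃ γ ∈ x, C.s α = C.r γ ∧ C.comp α γ ∈ pTail C δ}

/-- `𝒰_{C,0}`. -/
def UC0 (C : CategoryOfPaths Λ) (w : Λ) (x : Set Λ) : Set (Set Λ) :=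
  {E | E ∈ tailRing C w ∧ ∃ α ∈ x, pTail C α ⊆ E}

/-- `𝒰_C`. -/
def UC (C : CategoryOfPaths Λ) (w : Λ) (x : Set Λ) : Set (Set Λ) :=
  {E | E ∈ tailRing C w ∧ ∃ α ∈ x, x ∩ pTail C α ⊆ E}

/-- `X_v = vΛ*` as a type. -/
abbrev Xv (C : CategoryOfPaths Λ) (w : Λ) : Type u := {x : Set Λ // x ∈ lamStar C w}

/-- The topology on `X_v` generated by the sets `Ê`, `E ∈ 𝒜_v`. -/
def XvTop (C : CategoryOfPaths Λ) (w : Λ) : TopologicalSpace (Xv C w) :=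
  TopologicalSpace.generateFrom
    {t | ∃ E ∈ tailRing C w, t = {x : Xv C w | E ∈ UC C w x.1}}

/-- The vertices of `Λ`. -/
abbrev Vertex (C : CategoryOfPaths Λ) : Type u := {w : Λ // C.r w = w}

/-- `X`: the disjoint union of the spaces `X_v`. -/
abbrev Xtotal (C : CategoryOfPaths Λ) : Type u := Σ w : Vertex C, Xv C w.1

/-- The disjoint union topology on `X`. -/
def XtotalTop (C : CategoryOfPaths Λ) : TopologicalSpace (Xtotal C) :=
  letI : ∀ w : Vertex C, TopologicalSpace (Xv C w.1) := fun w => XvTop C w.1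
  inferInstance

/-- The boundary `∂Λ`: the closure of `Λ**` in `X`. -/
def boundarySet (C : CategoryOfPaths Λ) : Set (Xtotal C) :=
  @closure _ (XtotalTop C) {p : Xtotal C | p.2.1 ∈ lamStarStar C p.1.1}

/-- An exhaustive subset of `vΛ`. -/
def ExhaustiveAt (C : CategoryOfPaths Λ) (w : Λ) (F : Set Λ) : Prop :=
  ∀ α, C.r α = w → ∃ β ∈ F, pMeets C α β

/-- An aperiodic point of `Λ*`. -/
def pAperiodic (C : CategoryOfPaths Λ) (x : Set Λ) : Prop :=
  ∀ α ∈ x, ∀ β ∈ x, α ≠ β → pShift C α x ≠ pShift C β x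

/-- A right-aperiodic point of `wΛ*`. -/
def pRightAperiodicAt (C : CategoryOfPaths Λ) (w : Λ) (x : Set Λ) : Prop :=
  ∀ α β : Λ, C.s α = w → C.s β = w → α ≠ β → pMulStar C α x ≠ pMulStar C β x

/-- The triples `(α, β, x)` with `s α = s β` and `x ∈ s(α)Λ*`. -/
abbrev pTrip (C : CategoryOfPaths Λ) : Type u :=
  {t : Λ × Λ × Set Λ // C.s t.1 = C.s t.2.1 ∧ t.2.2 ∈ lamStar C (C.s t.1)}

/-- The groupoid equivalence relation on triples. -/
def tripRel (C : CategoryOfPaths Λ) (t t' : pTrip C) : Prop :=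
  ∃ (z : Set Λ) (δ δ' : Λ),
    z ∈ lamStar C (C.s δ) ∧ z ∈ lamStar C (C.s δ') ∧
    C.s t.1.1 = C.r δ ∧ C.s t'.1.1 = C.r δ' ∧
    t.1.2.2 = pMulStar C δ z ∧ t'.1.2.2 = pMulStar C δ' z ∧
    C.comp t.1.1 δ = C.comp t'.1.1 δ' ∧
    C.comp t.1.2.1 δ = C.comp t'.1.2.1 δ'

/-- The ultrafilter space of `𝒜(Λ₀,Λ)_v`. -/
abbrev relXv (C : CategoryOfPaths Λ) (Λ₀ : Set Λ) (w : Λ) : Type u :=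
  {U : Set (Set Λ) // IsUltrafilterIn (relAring C Λ₀ Set.univ w) U}

/-- The topology on the ultrafilter space of `𝒜(Λ₀,Λ)_v` generated by the `Ê`. -/
def relXvTop (C : CategoryOfPaths Λ) (Λ₀ : Set Λ) (w : Λ) :
    TopologicalSpace (relXv C Λ₀ w) :=
  TopologicalSpace.generateFrom
    {t | ∃ E ∈ relAring C Λ₀ Set.univ w, t = {U : relXv C Λ₀ w | E ∈ U.1}}

namespace Stmt0Aux

open Set

variable {S : Type*}

def Dfam (D0 : Set (Set S)) : Set (Set S) :=
  {Y | Y.Nonempty ∧ ∃ A ∈ D0, ∃ B : Set (Set S),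
    B.Finite ∧ B ⊆ D0 ∧ (∀ b ∈ B, b ⊆ A) ∧ Y = A \ ⋃₀ B}

def Afam (D0 : Set (Set S)) : Set (Set S) :=
  {X | ∃ F : Set (Set S), F.Finite ∧ F ⊆ Dfam D0 ∧ F.PairwiseDisjoint id ∧ X = ⋃₀ F}

variable {D0 : Set (Set S)}

theorem empty_mem : (∅ : Set S) ∈ Afam D0 :=
  ⟨∅, finite_empty, empty_subset _, pairwiseDisjoint_empty, by simp⟩

theorem single_mem {D : Set S} (h : D ∈ Dfam D0) : D ∈ Afam D0 :=
  ⟨{D}, finite_singleton _, by simpa using h, pairwiseDisjoint_singleton _ _, by simp⟩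

theorem disj_union_mem {X Y : Set S} (hX : X ∈ Afam D0) (hY : Y ∈ Afam D0)
    (hd : Disjoint X Y) : X ∪ Y ∈ Afam D0 := by
  obtain ⟨F1, hF1f, hF1s, hF1p, rfl⟩ := hX
  obtain ⟨F2, hF2f, hF2s, hF2p, rfl⟩ := hY
  refine ⟨F1 ∪ F2, hF1f.union hF2f, union_subset hF1s hF2s, ?_, (sUnion_union _ _).symm⟩
  intro a ha b hb hab
  rcases ha with ha | ha <;> rcases hb with hb | hb
  · exact hF1p ha hb hab
  · exact Set.disjoint_of_subset (subset_sUnion_of_mem ha) (subset_sUnion_of_mem hb) hd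
  · exact Set.disjoint_of_subset (subset_sUnion_of_mem ha) (subset_sUnion_of_mem hb) hd.symm
  · exact hF2p ha hb hab

variable (hD0 : ∀ E ∈ D0, ∀ F ∈ D0, ∃ G : Set (Set S), G.Finite ∧ G ⊆ D0 ∧ E ∩ F = ⋃₀ G)

include hD0

/-- normalization: B need not consist of subsets of A -/
theorem norm {A : Set S} (hA : A ∈ D0) {B : Set (Set S)} (hBf : B.Finite) (hBs : B ⊆ D0) :
    ∃ B' : Set (Set S), B'.Finite ∧ B' ⊆ D0 ∧ (∀ b ∈ B', b ⊆ A) ∧ A \ ⋃₀ B = A \ ⋃₀ B' := by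
  refine Set.Finite.induction_on (motive := fun B _ => B ⊆ D0 →
      ∃ B' : Set (Set S), B'.Finite ∧ B' ⊆ D0 ∧ (∀ b ∈ B', b ⊆ A) ∧ A \ ⋃₀ B = A \ ⋃₀ B')
      _ hBf (fun _ => ⟨∅, finite_empty, empty_subset _, by simp, rfl⟩) ?_ hBs
  intro b B hb hBfin ih hins
  obtain ⟨B', hB'f, hB's, hB'sub, hEq⟩ := ih (fun x hx => hins (Or.inr hx))
  obtain ⟨G, hGf, hGs, hGe⟩ := hD0 b (hins (Or.inl rfl)) A hA
  have hGA : ∀ c ∈ G, c ⊆ A := fun c hc =>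
    (subset_sUnion_of_mem hc).trans (hGe ▸ inter_subset_right)
  refine ⟨B' ∪ G, hB'f.union hGf, union_subset hB's hGs,
    fun c hc => hc.elim (hB'sub c) (hGA c), ?_⟩
  have key : ∀ x ∈ A, (x ∈ ⋃₀ B ↔ x ∈ ⋃₀ B') := by
    intro x hxA
    constructor
    · intro h
      by_contra h'
      exact (hEq ▸ (⟨hxA, h'⟩ : x ∈ A \ ⋃₀ B') : x ∈ A \ ⋃₀ B).2 h
    · intro h
      by_contra h'
      exact (hEq.symm ▸ (⟨hxA, h'⟩ : x ∈ A \ ⋃₀ B) : x ∈ A \ ⋃₀ B').2 h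
  have keyG : ∀ x ∈ A, (x ∈ b ↔ x ∈ ⋃₀ G) := by
    intro x hxA
    constructor
    · intro h; exact hGe ▸ mem_inter h hxA
    · intro h; exact (hGe ▸ h : x ∈ b ∩ A).1
  ext x
  simp only [sUnion_insert, sUnion_union, mem_diff, mem_union]
  constructor
  · rintro ⟨hxA, hx⟩
    refine ⟨hxA, fun h => hx ?_⟩
    rcases h with h | h
    · exact Or.inr ((key x hxA).mpr h)
    · exact Or.inl ((keyG x hxA).mpr h)
  · rintro ⟨hxA, hx⟩
    refine ⟨hxA, fun h => hx ?_⟩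
    rcases h with h | h
    · exact Or.inr ((keyG x hxA).mp h)
    · exact Or.inl ((key x hxA).mp h)

/-- any A \ ⋃₀ B with A ∈ D0, B finite ⊆ D0 is in Afam -/
theorem diff_mem {A : Set S} (hA : A ∈ D0) {B : Set (Set S)} (hBf : B.Finite)
    (hBs : B ⊆ D0) : A \ ⋃₀ B ∈ Afam D0 := by
  obtain ⟨B', hB'f, hB's, hB'sub, hEq⟩ := norm hD0 hA hBf hBs
  rw [hEq]
  rcases eq_empty_or_nonempty (A \ ⋃₀ B') with h | h
  · rw [h]; exact empty_mem
  · exact single_mem ⟨h, A, hA, B', hB'f, hB's, hB'sub, rfl⟩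

/-- union over G of (C \ ⋃₀ B) -/
theorem sUnion_diff_mem {G : Set (Set S)} (hGf : G.Finite) (hGs : G ⊆ D0)
    {B : Set (Set S)} (hBf : B.Finite) (hBs : B ⊆ D0) : (⋃₀ G) \ ⋃₀ B ∈ Afam D0 := by
  refine Set.Finite.induction_on
    (motive := fun G _ => G ⊆ D0 → (⋃₀ G) \ ⋃₀ B ∈ Afam D0) _ hGf
    (fun _ => by simpa using empty_mem) ?_ hGs
  intro C G hC hGfin ih hins
  · have hCD : C ∈ D0 := hins (Or.inl rfl)
    have hGs' : G ⊆ D0 := fun x hx => hins (Or.inr hx)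
    have heq : (⋃₀ insert C G) \ ⋃₀ B = (C \ ⋃₀ (B ∪ G)) ∪ ((⋃₀ G) \ ⋃₀ B) := by
      ext x
      simp only [sUnion_insert, sUnion_union, mem_diff, mem_union]
      constructor
      · rintro ⟨h | h, hB⟩
        · by_cases hG : x ∈ ⋃₀ G
          · exact Or.inr ⟨hG, hB⟩
          · exact Or.inl ⟨h, fun hh => hh.elim hB hG⟩
        · exact Or.inr ⟨h, hB⟩
      · rintro (⟨h, hn⟩ | ⟨h, hn⟩)
        · exact ⟨Or.inl h, fun hh => hn (Or.inl hh)⟩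
        · exact ⟨Or.inr h, hn⟩
    rw [heq]
    refine disj_union_mem (diff_mem hD0 hCD (hBf.union hGfin) (union_subset hBs hGs')) (ih hGs')
      ?_
    refine Set.disjoint_left.mpr ?_
    rintro x ⟨_, hn⟩ ⟨hG, _⟩
    exact hn (by rw [sUnion_union]; exact Or.inr hG)

/-- map lemma: shrink each piece -/
theorem map_mem {F : Set (Set S)} (hFf : F.Finite) (hFp : F.PairwiseDisjoint id)
    (g : Set S → Set S) (hg : ∀ D ∈ F, g D ⊆ D ∧ g D ∈ Afam D0) :
    (⋃ D ∈ F, g D) ∈ Afam D0 := by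
  refine Set.Finite.induction_on
    (motive := fun F _ => F.PairwiseDisjoint id → (∀ D ∈ F, g D ⊆ D ∧ g D ∈ Afam D0) →
      (⋃ D ∈ F, g D) ∈ Afam D0) _ hFf
    (fun _ _ => by simpa using empty_mem) ?_ hFp hg
  clear hFp hg hFf F
  intro D F hD hFfin ih hFp hg
  · rw [biUnion_insert]
    have hFp' : F.PairwiseDisjoint id := hFp.subset (subset_insert _ _)
    refine disj_union_mem (hg D (Or.inl rfl)).2
      (ih hFp' (fun D' hD' => hg D' (Or.inr hD'))) ?_
    refine Set.disjoint_left.mpr ?_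
    rintro x hx hx'
    simp only [mem_iUnion, exists_prop] at hx'
    obtain ⟨D', hD', hxD'⟩ := hx'
    have hne : D ≠ D' := fun h => hD (h ▸ hD')
    exact Set.disjoint_left.mp
      (hFp (Or.inl rfl) (Or.inr hD') hne) ((hg D (Or.inl rfl)).1 hx)
      ((hg D' (Or.inr hD')).1 hxD')

/-- X ∈ Afam, C ∈ D0 → X \ C ∈ Afam -/
theorem diff_D0_mem {X : Set S} (hX : X ∈ Afam D0) {C : Set S} (hC : C ∈ D0) :
    X \ C ∈ Afam D0 := by
  obtain ⟨F, hFf, hFs, hFp, rfl⟩ := hX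
  have : (⋃₀ F) \ C = ⋃ D ∈ F, (D \ C) := by
    ext x; simp only [mem_diff, mem_sUnion, mem_iUnion, exists_prop]; tauto
  rw [this]
  refine map_mem hD0 hFf hFp _ (fun D hD => ⟨diff_subset, ?_⟩)
  obtain ⟨hne, A, hA, B, hBf, hBs, hBsub, rfl⟩ := hFs hD
  have : (A \ ⋃₀ B) \ C = A \ ⋃₀ (insert C B) := by
    rw [sUnion_insert]; ext x
    simp only [mem_diff, mem_union]; tauto
  rw [this]
  exact diff_mem hD0 hA (hBf.insert C) (insert_subset hC hBs)

/-- X ∈ Afam, C ∈ D0 → X ∩ C ∈ Afam -/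
theorem inter_D0_mem {X : Set S} (hX : X ∈ Afam D0) {C : Set S} (hC : C ∈ D0) :
    X ∩ C ∈ Afam D0 := by
  obtain ⟨F, hFf, hFs, hFp, rfl⟩ := hX
  have : (⋃₀ F) ∩ C = ⋃ D ∈ F, (D ∩ C) := by
    ext x; simp only [mem_inter_iff, mem_sUnion, mem_iUnion, exists_prop]; tauto
  rw [this]
  refine map_mem hD0 hFf hFp _ (fun D hD => ⟨inter_subset_left, ?_⟩)
  obtain ⟨hne, A, hA, B, hBf, hBs, hBsub, rfl⟩ := hFs hD
  obtain ⟨G, hGf, hGs, hGe⟩ := hD0 A hA C hC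
  have : (A \ ⋃₀ B) ∩ C = (⋃₀ G) \ ⋃₀ B := by
    rw [← hGe]; ext x
    simp only [mem_diff, mem_inter_iff]; tauto
  rw [this]
  exact sUnion_diff_mem hD0 hGf hGs hBf hBs

/-- X ∈ Afam, B fin ⊆ D0 → X ∩ ⋃₀ B ∈ Afam -/
theorem inter_sUnion_mem {B : Set (Set S)} (hBf : B.Finite) (hBs : B ⊆ D0) :
    ∀ X ∈ Afam D0, X ∩ ⋃₀ B ∈ Afam D0 := by
  refine Set.Finite.induction_on
    (motive := fun B _ => B ⊆ D0 → ∀ X ∈ Afam D0, X ∩ ⋃₀ B ∈ Afam D0) _ hBf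
    (fun _ X _ => by simpa using empty_mem) ?_ hBs
  intro b B hb hBfin ih hins X hX
  have hbD : b ∈ D0 := hins (Or.inl rfl)
  have heq : X ∩ ⋃₀ insert b B = (X ∩ b) ∪ ((X \ b) ∩ ⋃₀ B) := by
    ext x
    simp only [sUnion_insert, mem_inter_iff, mem_union, mem_diff]
    by_cases hxb : x ∈ b <;> tauto
  rw [heq]
  refine disj_union_mem (inter_D0_mem hD0 hX hbD)
    (ih (fun y hy => hins (Or.inr hy)) _ (diff_D0_mem hD0 hX hbD)) ?_
  exact Set.disjoint_left.mpr (fun x hx hx' => hx'.1.2 hx.2)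

/-- X ∈ Afam, D ∈ Dfam → X \ D ∈ Afam -/
theorem diff_D_mem {X : Set S} (hX : X ∈ Afam D0) {D : Set S} (hD : D ∈ Dfam D0) :
    X \ D ∈ Afam D0 := by
  obtain ⟨hne, A, hA, B, hBf, hBs, hBsub, rfl⟩ := hD
  have heq : X \ (A \ ⋃₀ B) = (X \ A) ∪ ((X ∩ A) ∩ ⋃₀ B) := by
    ext x
    simp only [mem_diff, mem_union, mem_inter_iff]
    by_cases hxA : x ∈ A <;> tauto
  rw [heq]
  refine disj_union_mem (diff_D0_mem hD0 hX hA)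
    (inter_sUnion_mem hD0 hBf hBs _ (inter_D0_mem hD0 hX hA)) ?_
  exact Set.disjoint_left.mpr (fun x hx hx' => hx.2 hx'.1.2)

/-- difference closure -/
theorem diff_sUnion_D_mem {F : Set (Set S)} (hFf : F.Finite) (hFs : F ⊆ Dfam D0) :
    ∀ X ∈ Afam D0, X \ ⋃₀ F ∈ Afam D0 := by
  refine Set.Finite.induction_on
    (motive := fun F _ => F ⊆ Dfam D0 → ∀ X ∈ Afam D0, X \ ⋃₀ F ∈ Afam D0) _ hFf
    (fun _ X hX => by simpa using hX) ?_ hFs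
  intro D F hD hFfin ih hins X hX
  have heq : X \ ⋃₀ insert D F = (X \ D) \ ⋃₀ F := by
    rw [sUnion_insert]; ext x; simp only [mem_diff, mem_union]; tauto
  rw [heq]
  exact ih (fun y hy => hins (Or.inr hy)) _ (diff_D_mem hD0 hX (hins (Or.inl rfl)))

theorem diff_mem' {X Y : Set S} (hX : X ∈ Afam D0) (hY : Y ∈ Afam D0) :
    X \ Y ∈ Afam D0 := by
  obtain ⟨F, hFf, hFs, hFp, rfl⟩ := hY
  exact diff_sUnion_D_mem hD0 hFf hFs _ hX

theorem inter_mem' {X Y : Set S} (hX : X ∈ Afam D0) (hY : Y ∈ Afam D0) :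
    X ∩ Y ∈ Afam D0 := by
  have : X ∩ Y = X \ (X \ Y) := by rw [diff_diff_right_self]
  rw [this]
  exact diff_mem' hD0 hX (diff_mem' hD0 hX hY)

theorem union_mem' {X Y : Set S} (hX : X ∈ Afam D0) (hY : Y ∈ Afam D0) :
    X ∪ Y ∈ Afam D0 := by
  have : X ∪ Y = (X \ Y) ∪ Y := (diff_union_self).symm
  rw [this]
  exact disj_union_mem (diff_mem' hD0 hX hY) hY disjoint_sdiff_left

theorem D0_subset : D0 ⊆ Afam D0 := by
  intro A hA
  have : A = A \ ⋃₀ (∅ : Set (Set S)) := by simp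
  rw [this]
  exact diff_mem hD0 hA finite_empty (empty_subset _)

omit hD0 in
theorem sUnion_mem_ring {R : Set (Set S)} (h0 : ∅ ∈ R)
    (hu : ∀ E ∈ R, ∀ F ∈ R, E ∪ F ∈ R) {B : Set (Set S)} (hBf : B.Finite)
    (hBs : B ⊆ R) : ⋃₀ B ∈ R := by
  refine Set.Finite.induction_on (motive := fun B _ => B ⊆ R → ⋃₀ B ∈ R) _ hBf
    (fun _ => by simpa using h0) ?_ hBs
  intro b B hb hBfin ih hins
  rw [sUnion_insert]
  exact hu b (hins (Or.inl rfl)) _ (ih (fun y hy => hins (Or.inr hy)))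

omit hD0 in
theorem Afam_subset_ring {R : Set (Set S)} (h0 : ∅ ∈ R)
    (hu : ∀ E ∈ R, ∀ F ∈ R, E ∪ F ∈ R) (hd : ∀ E ∈ R, ∀ F ∈ R, E \ F ∈ R)
    (hD0R : D0 ⊆ R) : Afam D0 ⊆ R := by
  have hDR : Dfam D0 ⊆ R := by
    rintro D ⟨hne, A, hA, B, hBf, hBs, hBsub, rfl⟩
    exact hd A (hD0R hA) _ (sUnion_mem_ring h0 hu hBf (hBs.trans hD0R))
  rintro X ⟨F, hFf, hFs, hFp, rfl⟩
  exact sUnion_mem_ring h0 hu hFf (hFs.trans hDR)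

end Stmt0Aux

/-- Lemma 1.6. If the intersection of two sets from `𝒟⁰` is a
finite union of sets from `𝒟⁰`, then the collection `𝒜` of finite disjoint
unions of nonempty sets of the form `A \ (B₁ ∪ ⋯ ∪ Bₙ)` (with `A, Bᵢ ∈ 𝒟⁰`,
`Bᵢ ⊆ A`) is the ring of sets generated by `𝒟⁰`. -/
theorem statement0 {S : Type*} (D0 : Set (Set S))
    (hD0 : ∀ E ∈ D0, ∀ F ∈ D0, ∃ G : Set (Set S), G.Finite ∧ G ⊆ D0 ∧ E ∩ F = ⋃₀ G) :
    {X : Set S | ∃ F : Set (Set S), F.Finite ∧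
        F ⊆ {Y | Y.Nonempty ∧ ∃ A ∈ D0, ∃ B : Set (Set S),
          B.Finite ∧ B ⊆ D0 ∧ (∀ b ∈ B, b ⊆ A) ∧ Y = A \ ⋃₀ B} ∧
        F.PairwiseDisjoint id ∧ X = ⋃₀ F} = setRingGen D0 := by
  apply Set.Subset.antisymm
  · intro X hX
    refine Set.mem_sInter.mpr ?_
    rintro R ⟨⟨h0, hu, hi, hd⟩, hD0R⟩
    exact Stmt0Aux.Afam_subset_ring h0 hu hd hD0R hX
  · intro X hX
    refine Set.mem_sInter.mp hX (Stmt0Aux.Afam D0) ⟨⟨Stmt0Aux.empty_mem,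
      fun E hE F hF => Stmt0Aux.union_mem' hD0 hE hF,
      fun E hE F hF => Stmt0Aux.inter_mem' hD0 hE hF,
      fun E hE F hF => Stmt0Aux.diff_mem' hD0 hE hF⟩, Stmt0Aux.D0_subset hD0⟩
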